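/- arXiv:1404.1171 — 2 statements merged into one kernel-verified Lean document; each statement's English description precedes it below -/
import Mathlib

section
/- Let a, b ∈ ℝ with a > −1, b ≥ 0 and b − a > 1. Then there exists a constant C > 0 such that for all real q ≥ 0 one has Σ_{p=0}^∞ (1+p)^a / (1+p+q)^b ≤ C / (1+q)^{b−a−1}. -/
open Real Finset

lemma aux_sumA (s t : ℝ) (hs : 1 < s) (ht : 0 ≤ t) :
    Summable (fun p : ℕ => (1 + (p : ℝ) + t) ^ (-s)) := by
  have h1 : Summable (fun p : ℕ => 1 / |(p : ℝ) + 1| ^ s) :=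
    (Real.summable_one_div_nat_add_rpow 1 s).2 hs
  have h2 : Summable (fun p : ℕ => (1 + (p : ℝ)) ^ (-s)) := by
    refine h1.congr (fun p => ?_)
    rw [abs_of_pos (by positivity), Real.rpow_neg (by positivity), one_div,
      add_comm (p:ℝ) 1]
  refine Summable.of_nonneg_of_le (fun p => Real.rpow_nonneg (by positivity) _)
    (fun p => ?_) h2
  exact Real.rpow_le_rpow_of_nonpos (by positivity) (by linarith) (by linarith)

lemma aux_tailA (s t : ℝ) (hs : 1 < s) (ht : 0 ≤ t) :
    ∑' p : ℕ, (1 + (p : ℝ) + t) ^ (-s) ≤ (1 + t) ^ (-s) + (1 + t) ^ (1 - s) / (s - 1) := by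
  have hsum := aux_sumA s t hs ht
  rw [hsum.tsum_eq_zero_add]
  have h0 : (1 + ((0:ℕ) : ℝ) + t) ^ (-s) = (1 + t) ^ (-s) := by norm_num
  rw [h0]
  gcongr
  -- tail ≤ integral bound
  refine Real.tsum_le_of_sum_range_le (fun n => by positivity) (fun n => ?_)
  have hanti : AntitoneOn (fun x : ℝ => x ^ (-s)) (Set.Icc (1 + t) (1 + t + n)) := by
    intro x hx y hy hxy
    exact Real.rpow_le_rpow_of_nonpos (by have := hx.1; linarith) hxy (by linarith)
  have hint := hanti.sum_le_integral
  have hval : ∫ x in (1 + t)..(1 + t + n), x ^ (-s) =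
      ((1 + t + n) ^ (-s + 1) - (1 + t) ^ (-s + 1)) / (-s + 1) := by
    apply integral_rpow
    right
    constructor
    · intro h; linarith
    · rw [Set.uIcc_of_le (by linarith)]
      intro h
      have := h.1
      linarith
  calc ∑ i ∈ range n, (1 + (↑(i + 1) : ℝ) + t) ^ (-s)
      = ∑ i ∈ range n, ((1 + t) + ((i : ℝ) + 1)) ^ (-s) := by
        apply Finset.sum_congr rfl; intro i _; push_cast; ring_nf
    _ ≤ ∫ x in (1 + t)..(1 + t + n), x ^ (-s) := by
        have := hint
        simpa using this
    _ = ((1 + t + n) ^ (-s + 1) - (1 + t) ^ (-s + 1)) / (-s + 1) := hval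
    _ = ((1 + t) ^ (1 - s) - (1 + t + n) ^ (1 - s)) / (s - 1) := by
        rw [show -s + 1 = 1 - s by ring]
        rw [div_eq_div_iff (by linarith) (by linarith)]
        ring
    _ ≤ (1 + t) ^ (1 - s) / (s - 1) := by
        have h2 : (0:ℝ) ≤ (1 + t + ↑n) ^ (1 - s) := Real.rpow_nonneg (by positivity) _
        gcongr <;> linarith

lemma aux_headB (s : ℝ) (hs : -1 < s) (n : ℕ) :
    ∑ p ∈ Finset.range n, (1 + (p : ℝ)) ^ s ≤ (1 + 1 / (s + 1)) * (1 + (n : ℝ)) ^ (s + 1) := by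
  have hs1 : 0 < s + 1 := by linarith
  have hpow1 : (1:ℝ) ≤ (1 + (n:ℝ)) ^ (s + 1) := by
    calc (1:ℝ) = 1 ^ (s + 1) := (Real.one_rpow _).symm
      _ ≤ (1 + (n:ℝ)) ^ (s + 1) :=
        Real.rpow_le_rpow (by norm_num) (le_add_of_nonneg_right (Nat.cast_nonneg n)) hs1.le
  rcases le_or_gt 0 s with h | h
  · calc ∑ p ∈ Finset.range n, (1 + (p : ℝ)) ^ s
        ≤ ∑ p ∈ Finset.range n, (1 + (n : ℝ)) ^ s := by
          apply Finset.sum_le_sum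
          intro p hp
          have : (p:ℝ) ≤ n := Nat.cast_le.2 (Finset.mem_range.1 hp).le
          exact Real.rpow_le_rpow (by positivity) (by linarith) h
      _ = (n : ℝ) * (1 + (n : ℝ)) ^ s := by
          rw [Finset.sum_const, Finset.card_range, nsmul_eq_mul]
      _ ≤ (1 + (n : ℝ)) * (1 + (n : ℝ)) ^ s := by
          gcongr
          linarith
      _ = (1 + (n : ℝ)) ^ (s + 1) := by
          rw [Real.rpow_add_one (by positivity), mul_comm]
      _ ≤ (1 + 1 / (s + 1)) * (1 + (n : ℝ)) ^ (s + 1) := by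
          nth_rw 1 [← one_mul ((1 + (n:ℝ)) ^ (s + 1))]
          gcongr
          have : 0 < 1 / (s + 1) := by positivity
          linarith
  · match n with
    | 0 => simp; positivity
    | (m + 1) =>
      rw [Finset.sum_range_succ']
      have h1 : (1 + ((0:ℕ):ℝ)) ^ s = 1 := by norm_num
      rw [h1]
      have hanti : AntitoneOn (fun x : ℝ => x ^ s) (Set.Icc (1:ℝ) (1 + (m:ℝ))) := by
        intro x hx y hy hxy
        exact Real.rpow_le_rpow_of_nonpos (by have := hx.1; linarith) hxy h.le
      have hint := hanti.sum_le_integral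
      have hval : ∫ x in (1:ℝ)..(1 + (m:ℝ)), x ^ s =
          ((1 + (m:ℝ)) ^ (s + 1) - 1 ^ (s + 1)) / (s + 1) := integral_rpow (Or.inl hs)
      have hub : ∑ i ∈ Finset.range m, (1 + (↑(i + 1) : ℝ)) ^ s ≤
          (1 + ((m:ℝ) + 1)) ^ (s + 1) / (s + 1) := by
        calc ∑ i ∈ Finset.range m, (1 + (↑(i + 1) : ℝ)) ^ s
            = ∑ i ∈ Finset.range m, ((1:ℝ) + (↑(i + 1) : ℕ)) ^ s := by norm_num
          _ ≤ ∫ x in (1:ℝ)..(1 + (m:ℝ)), x ^ s := by simpa using hint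
          _ = ((1 + (m:ℝ)) ^ (s + 1) - 1 ^ (s + 1)) / (s + 1) := hval
          _ ≤ (1 + ((m:ℝ) + 1)) ^ (s + 1) / (s + 1) := by
              rw [Real.one_rpow]
              gcongr
              have : (0:ℝ) ≤ (1 + (m:ℝ)) ^ (s+1) := by positivity
              have hle : (1 + (m:ℝ)) ^ (s+1) ≤ (1 + ((m:ℝ)+1)) ^ (s+1) :=
                Real.rpow_le_rpow (by positivity) (by linarith) hs1.le
              linarith
      push_cast at hub ⊢
      have := hpow1
      push_cast at this
      rw [show (1 + 1 / (s + 1)) * (1 + ((m:ℝ) + 1)) ^ (s + 1)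
          = (1 + ((m:ℝ) + 1)) ^ (s + 1) + (1 + ((m:ℝ) + 1)) ^ (s + 1) / (s + 1) by
        field_simp]
      linarith

lemma aux_twoPow (a x y : ℝ) (hx : 0 < x) (hxy : x ≤ y) (hyx : y ≤ 2 * x) :
    x ^ a ≤ 2 ^ |a| * y ^ a := by
  rcases le_or_gt 0 a with h | h
  · rw [abs_of_nonneg h]
    calc x ^ a ≤ y ^ a := Real.rpow_le_rpow hx.le hxy h
      _ ≤ 2 ^ a * y ^ a := by
          nth_rw 1 [← one_mul (y ^ a)]
          apply mul_le_mul_of_nonneg_right _ (Real.rpow_nonneg (by linarith) a)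
          calc (1:ℝ) = 1 ^ a := (Real.one_rpow a).symm
            _ ≤ 2 ^ a := Real.rpow_le_rpow (by norm_num) one_le_two h
  · rw [abs_of_neg h]
    have hy : 0 < y := lt_of_lt_of_le hx hxy
    have hy2 : y / 2 ≤ x := by linarith
    calc x ^ a ≤ (y / 2) ^ a :=
        Real.rpow_le_rpow_of_nonpos (by positivity) hy2 h.le
      _ = 2 ^ (-a) * y ^ a := by
          rw [Real.div_rpow hy.le (by norm_num), Real.rpow_neg (by norm_num)]
          rw [div_eq_mul_inv, mul_comm]

set_option maxHeartbeats 2000000 in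
/-- Lemma 4.17: for `a > −1`, `b ≥ 0`, `b − a > 1` there is `C > 0` with
`Σ_{p=0}^∞ (1+p)^a / (1+p+q)^b ≤ C / (1+q)^{b−a−1}` for all `q ≥ 0`;
in particular the series converges. -/
theorem statement11 (a b : ℝ) (ha : -1 < a) (hb : 0 ≤ b) (hba : 1 < b - a) :
    ∃ C : ℝ, 0 < C ∧ ∀ q : ℝ, 0 ≤ q →
      Summable (fun p : ℕ => (1 + (p : ℝ))^a / (1 + (p : ℝ) + q)^b) ∧
      ∑' p : ℕ, (1 + (p : ℝ))^a / (1 + (p : ℝ) + q)^b ≤ C / (1 + q)^(b - a - 1) := by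
  have ha1 : 0 < a + 1 := by linarith
  have hba1 : 0 < b - a - 1 := by linarith
  refine ⟨(1 + 1/(a+1)) * 2^(a+1) + 2^|a| * (1 + 1/(b-a-1)), by positivity, fun q hq => ?_⟩
  have hq1 : (0:ℝ) < 1 + q := by linarith
  set N := ⌈q⌉₊ with hN
  have hqN : q ≤ (N:ℝ) := Nat.le_ceil q
  have hNq : (N:ℝ) ≤ q + 1 := (Nat.ceil_lt_add_one hq).le
  -- summability
  have hsumm : Summable (fun p : ℕ => (1 + (p : ℝ))^a / (1 + (p : ℝ) + q)^b) := by
    have h0 := aux_sumA (b - a) 0 (by linarith) le_rfl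
    refine Summable.of_nonneg_of_le (fun p => by positivity) (fun p => ?_) h0
    have hp1 : (0:ℝ) < 1 + p := by positivity
    calc (1 + (p : ℝ))^a / (1 + (p : ℝ) + q)^b
        ≤ (1 + (p : ℝ))^a / (1 + (p : ℝ))^b := by
          apply div_le_div_of_nonneg_left (Real.rpow_nonneg hp1.le a) (by positivity)
          exact Real.rpow_le_rpow hp1.le (by linarith) hb
      _ = (1 + (p : ℝ) + 0) ^ (-(b - a)) := by
          rw [add_zero, ← Real.rpow_sub hp1]
          ring_nf
  refine ⟨hsumm, ?_⟩
  -- rewrite RHS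
  have hrhs : ((1 + 1/(a+1)) * 2^(a+1) + 2^|a| * (1 + 1/(b-a-1))) / (1 + q)^(b - a - 1)
      = ((1 + 1/(a+1)) * 2^(a+1) + 2^|a| * (1 + 1/(b-a-1))) * (1 + q)^(a + 1 - b) := by
    rw [div_eq_mul_inv, ← Real.rpow_neg hq1.le, show -(b - a - 1) = a + 1 - b from by ring]
  rw [hrhs, ← hsumm.sum_add_tsum_nat_add N]
  have key1 : ∑ p ∈ Finset.range N, (1 + (p : ℝ))^a / (1 + (p : ℝ) + q)^b
      ≤ (1 + 1/(a+1)) * 2^(a+1) * (1 + q)^(a + 1 - b) := by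
    calc ∑ p ∈ Finset.range N, (1 + (p : ℝ))^a / (1 + (p : ℝ) + q)^b
        ≤ ∑ p ∈ Finset.range N, (1 + (p : ℝ))^a / (1 + q)^b := by
          apply Finset.sum_le_sum
          intro p _
          apply div_le_div_of_nonneg_left (Real.rpow_nonneg (by positivity) a) (by positivity)
          exact Real.rpow_le_rpow hq1.le (by linarith [(Nat.cast_nonneg p : (0:ℝ) ≤ p)]) hb
      _ = (∑ p ∈ Finset.range N, (1 + (p : ℝ))^a) / (1 + q)^b := by
          rw [Finset.sum_div]
      _ ≤ ((1 + 1/(a+1)) * (1 + (N:ℝ))^(a+1)) / (1 + q)^b := by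
          gcongr
          exact aux_headB a ha N
      _ ≤ ((1 + 1/(a+1)) * (2^(a+1) * (1 + q)^(a+1))) / (1 + q)^b := by
          gcongr
          rw [← Real.mul_rpow (by norm_num) hq1.le]
          exact Real.rpow_le_rpow (by positivity) (by linarith) ha1.le
      _ = (1 + 1/(a+1)) * 2^(a+1) * ((1 + q)^(a+1) / (1 + q)^b) := by ring
      _ = (1 + 1/(a+1)) * 2^(a+1) * (1 + q)^(a + 1 - b) := by
          rw [← Real.rpow_sub hq1]
  have key2 : ∑' p : ℕ, (1 + ((p + N : ℕ) : ℝ))^a / (1 + ((p + N : ℕ) : ℝ) + q)^b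
      ≤ 2^|a| * (1 + 1/(b-a-1)) * (1 + q)^(a + 1 - b) := by
    have hterm : ∀ p : ℕ, (1 + ((p + N : ℕ) : ℝ))^a / (1 + ((p + N : ℕ) : ℝ) + q)^b
        ≤ 2^|a| * (1 + (p:ℝ) + ((N:ℝ) + q))^(-(b-a)) := by
      intro p
      have hcast : ((p + N : ℕ) : ℝ) = (p:ℝ) + (N:ℝ) := by push_cast; ring
      rw [hcast]
      have hx0 : (0:ℝ) < 1 + (p:ℝ) + (N:ℝ) := by positivity
      have hy0 : (0:ℝ) < 1 + (p:ℝ) + ((N:ℝ) + q) := by positivity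
      have h1 : (1 + (p:ℝ) + (N:ℝ)) ^ a ≤ 2^|a| * (1 + (p:ℝ) + ((N:ℝ) + q)) ^ a :=
        aux_twoPow a _ _ hx0 (by linarith) (by linarith)
      calc (1 + ((p:ℝ) + (N:ℝ)))^a / (1 + ((p:ℝ) + (N:ℝ)) + q)^b
          = (1 + (p:ℝ) + (N:ℝ)) ^ a / (1 + (p:ℝ) + ((N:ℝ) + q)) ^ b := by
            rw [show (1 + ((p:ℝ) + (N:ℝ))) = 1 + (p:ℝ) + (N:ℝ) from by ring,
              show (1 + (p:ℝ) + (N:ℝ) + q) = 1 + (p:ℝ) + ((N:ℝ) + q) from by ring]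
        _ ≤ (2^|a| * (1 + (p:ℝ) + ((N:ℝ) + q)) ^ a) / (1 + (p:ℝ) + ((N:ℝ) + q)) ^ b := by
            gcongr
        _ = 2^|a| * ((1 + (p:ℝ) + ((N:ℝ) + q)) ^ a / (1 + (p:ℝ) + ((N:ℝ) + q)) ^ b) := by
            ring
        _ = 2^|a| * (1 + (p:ℝ) + ((N:ℝ) + q)) ^ (-(b - a)) := by
            rw [← Real.rpow_sub hy0, show a - b = -(b - a) from by ring]
    have hNq0 : (0:ℝ) ≤ (N:ℝ) + q := by positivity
    have hsum2 := aux_sumA (b - a) ((N:ℝ) + q) (by linarith) hNq0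
    calc ∑' p : ℕ, (1 + ((p + N : ℕ) : ℝ))^a / (1 + ((p + N : ℕ) : ℝ) + q)^b
        ≤ ∑' p : ℕ, 2^|a| * (1 + (p:ℝ) + ((N:ℝ) + q))^(-(b-a)) := by
          apply Summable.tsum_le_tsum hterm ((summable_nat_add_iff N).2 hsumm) (hsum2.mul_left _)
      _ = 2^|a| * ∑' p : ℕ, (1 + (p:ℝ) + ((N:ℝ) + q))^(-(b-a)) := tsum_mul_left
      _ ≤ 2^|a| * ((1 + ((N:ℝ) + q))^(-(b-a)) + (1 + ((N:ℝ) + q))^(1-(b-a)) / (b-a-1)) := by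
          gcongr
          have := aux_tailA (b - a) ((N:ℝ) + q) (by linarith) hNq0
          calc ∑' p : ℕ, (1 + (p:ℝ) + ((N:ℝ) + q))^(-(b-a))
              ≤ (1 + ((N:ℝ) + q))^(-(b-a)) + (1 + ((N:ℝ) + q))^(1-(b-a)) / ((b-a) - 1) := this
            _ = (1 + ((N:ℝ) + q))^(-(b-a)) + (1 + ((N:ℝ) + q))^(1-(b-a)) / (b-a-1) := by
                norm_num
      _ ≤ 2^|a| * ((1 + q)^(a+1-b) + (1 + q)^(a+1-b) / (b-a-1)) := by
          gcongr 2^|a| * (?_ + ?_ / _)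
          · calc (1 + ((N:ℝ) + q))^(-(b-a))
                ≤ (1 + q)^(-(b-a)) :=
                  Real.rpow_le_rpow_of_nonpos hq1 (by linarith) (by linarith)
              _ ≤ (1 + q)^(a+1-b) :=
                  Real.rpow_le_rpow_of_exponent_le (by linarith) (by linarith)
          · calc (1 + ((N:ℝ) + q))^(1-(b-a))
                ≤ (1 + q)^(1-(b-a)) :=
                  Real.rpow_le_rpow_of_nonpos hq1 (by linarith) (by linarith)
              _ = (1 + q)^(a+1-b) := by rw [show 1-(b-a) = a+1-b from by ring]
      _ = 2^|a| * (1 + 1/(b-a-1)) * (1 + q)^(a + 1 - b) := by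
          field_simp
  calc (∑ p ∈ Finset.range N, (1 + (p : ℝ))^a / (1 + (p : ℝ) + q)^b)
        + ∑' p : ℕ, (1 + ((p + N : ℕ) : ℝ))^a / (1 + ((p + N : ℕ) : ℝ) + q)^b
      ≤ (1 + 1/(a+1)) * 2^(a+1) * (1 + q)^(a + 1 - b)
        + 2^|a| * (1 + 1/(b-a-1)) * (1 + q)^(a + 1 - b) := add_le_add key1 key2
    _ = ((1 + 1/(a+1)) * 2^(a+1) + 2^|a| * (1 + 1/(b-a-1))) * (1 + q)^(a + 1 - b) := by ring
end

section
/- Let i, j ∈ ℕ with j > i and set (r, r′) = (−ρ−i, −ρ′−j). Then every admissible solution t for (r, r′) satisfies t(α, α′) = 0 whenever α ≤ i or α′ > j. -/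
noncomputable section

/-- ρ = (n-1)/2 as a complex number. -/
def rho (n : ℕ) : ℂ := ((n : ℂ) - 1) / 2

/-- ρ' = (n-2)/2 as a complex number. -/
def rho' (n : ℕ) : ℂ := ((n : ℂ) - 2) / 2

/-- A diagonal sequence for `(r, r')`. -/
def IsDiagSeq (n : ℕ) (r r' : ℂ) (s : ℕ → ℂ) : Prop :=
  ∀ α : ℕ, (2*r' + 2*(α : ℂ) + (n : ℂ) - 2) * s α
    = (2*r + 2*(α : ℂ) + (n : ℂ) - 1) * s (α + 1)

/-- L_even. -/
def Leven (n : ℕ) : Set (ℂ × ℂ) :=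
  {p | ∃ i j : ℕ, p.1 = -rho n - (i : ℂ) ∧ p.2 = -rho' n - (j : ℂ) ∧ ∃ k : ℕ, i = j + 2*k}

/-- L_odd. -/
def Lodd (n : ℕ) : Set (ℂ × ℂ) :=
  {p | ∃ i j : ℕ, p.1 = -rho n - (i : ℂ) ∧ p.2 = -rho' n - (j : ℂ) ∧ ∃ k : ℕ, i = j + 2*k + 1}

/-- An admissible solution `t : ℕ × ℕ → ℂ` for `(r, r')`:
`t(α,α') = 0` when `α' > α` or `α − α'` is odd (equivalently `α + α'` is odd),
and the relations (R1), (R2) hold for all `α ≥ α'` with `α − α'` even.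
The natural-subtraction index `α - 1` is harmless, since in (R1) its coefficient
`(α − α')` vanishes when `α = α'`, and in (R2) we have `α ≥ α' ≥ 1`. -/
def IsAdmissible (n : ℕ) (r r' : ℂ) (t : ℕ → ℕ → ℂ) : Prop :=
  (∀ α α' : ℕ, (α < α' ∨ Odd (α + α')) → t α α' = 0) ∧
  (∀ α α' : ℕ, α' ≤ α → Even (α + α') →
    ((2*(α : ℂ) + (n : ℂ) - 2) * (2*r' + 2*(α' : ℂ) + (n : ℂ) - 2) * t α α'
      = ((α : ℂ) + (α' : ℂ) + (n : ℂ) - 2) * (2*r + 2*(α : ℂ) + (n : ℂ) - 1)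
          * t (α + 1) (α' + 1)
        + ((α : ℂ) - (α' : ℂ)) * (2*r - 2*(α : ℂ) - (n : ℂ) + 3)
          * t (α - 1) (α' + 1)) ∧
    (1 ≤ α' →
      (2*(α : ℂ) + (n : ℂ) - 2) * (2*r' - 2*(α' : ℂ) - (n : ℂ) + 4) * t α α'
      = ((α : ℂ) - (α' : ℂ) + 1) * (2*r + 2*(α : ℂ) + (n : ℂ) - 1)
          * t (α + 1) (α' - 1)
        + ((α : ℂ) + (α' : ℂ) + (n : ℂ) - 3) * (2*r - 2*(α : ℂ) - (n : ℂ) + 3)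
          * t (α - 1) (α' - 1)))

theorem statement12 (n : ℕ) (hn : 3 ≤ n) (i j : ℕ) (hij : i < j) (r r' : ℂ)
    (hr : r = -rho n - (i : ℂ)) (hr' : r' = -rho' n - (j : ℂ)) :
    ∀ t : ℕ → ℕ → ℂ, IsAdmissible n r r' t →
      ∀ α α' : ℕ, (α ≤ i ∨ j < α') → t α α' = 0 := by
  subst hr hr'
  intro t ht
  obtain ⟨hzero, hrel⟩ := ht
  have hsub : ∀ a b : ℕ, a ≠ b → ((a:ℂ) - (b:ℂ)) ≠ 0 := by
    intro a b h
    exact sub_ne_zero.mpr (by exact_mod_cast h)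
  have hne : ∀ a b : ℕ, a ≠ b → ∀ z : ℂ, (a:ℂ) - (b:ℂ) = z → z ≠ 0 :=
    fun a b h z hz => hz ▸ hsub a b h
  have hmul : ∀ a b c : ℂ, a ≠ 0 → b ≠ 0 → a * b * c = 0 → c = 0 := by
    intro a b c ha hb h
    rcases mul_eq_zero.mp h with h | h
    · rcases mul_eq_zero.mp h with h | h
      · exact absurd h ha
      · exact absurd h hb
    · exact h
  have hR1 : ∀ α α' : ℕ, α' ≤ α → Even (α + α') →
      (2*(α:ℂ)+(n:ℂ)-2) * ((α':ℂ)-(j:ℂ)) * t α α'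
        = ((α:ℂ)+(α':ℂ)+(n:ℂ)-2) * ((α:ℂ)-(i:ℂ)) * t (α+1) (α'+1)
          - ((α:ℂ)-(α':ℂ)) * ((α:ℂ)+(i:ℂ)+(n:ℂ)-2) * t (α-1) (α'+1) := by
    intro α α' hle hev
    have h := (hrel α α' hle hev).1
    simp only [rho, rho'] at h
    linear_combination h / 2
  have hR2 : ∀ α α' : ℕ, α' ≤ α → Even (α + α') → 1 ≤ α' →
      (2*(α:ℂ)+(n:ℂ)-2) * ((α':ℂ)+(j:ℂ)+(n:ℂ)-3) * t α α'
        = -(((α:ℂ)-(α':ℂ)+1) * ((α:ℂ)-(i:ℂ)) * t (α+1) (α'-1))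
          + ((α:ℂ)+(α':ℂ)+(n:ℂ)-3) * ((α:ℂ)+(i:ℂ)+(n:ℂ)-2) * t (α-1) (α'-1) := by
    intro α α' hle hev h1
    have h := (hrel α α' hle hev).2 h1
    simp only [rho, rho'] at h
    linear_combination -h / 2
  -- Claim A : t α α' = 0 for α ≤ i
  have hA : ∀ α α' : ℕ, α ≤ i → t α α' = 0 := by
    have key : ∀ N α α' : ℕ, i - α' < N → α ≤ i → t α α' = 0 := by
      intro N
      induction N with
      | zero => intro α α' h; exact absurd h (Nat.not_lt_zero _)
      | succ N ih =>
        intro α α' hμ hαi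
        rcases Nat.lt_or_ge α α' with hlt | hle
        · exact hzero α α' (Or.inl hlt)
        rcases Nat.even_or_odd (α + α') with hev | hod
        · have E := hR1 α α' hle hev
          have h1 : ((α:ℂ)-(i:ℂ)) * t (α+1) (α'+1) = 0 := by
            rcases Nat.lt_or_ge α i with h | h
            · rw [ih (α+1) (α'+1) (by omega) (by omega)]; ring
            · have hei : α = i := le_antisymm hαi h
              rw [hei]; simp
          have h2 : ((α:ℂ)-(α':ℂ)) * t (α-1) (α'+1) = 0 := by
            rcases Nat.eq_or_lt_of_le hle with h | h
            · rw [h]; simp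
            · obtain ⟨k, hk⟩ := hev
              rw [ih (α-1) (α'+1) (by omega) (by omega)]; ring
          have h0 : (2*(α:ℂ)+(n:ℂ)-2) * ((α':ℂ)-(j:ℂ)) * t α α' = 0 := by
            linear_combination E + ((α:ℂ)+(α':ℂ)+(n:ℂ)-2)*h1 - ((α:ℂ)+(i:ℂ)+(n:ℂ)-2)*h2
          exact hmul _ _ _ (hne (2*α+n) 2 (by omega) _ (by push_cast; ring))
            (hsub α' j (by omega)) h0
        · exact hzero α α' (Or.inr hod)
    exact fun α α' h => key (i+1) α α' (by omega) h
  -- Claim B, diagonal part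
  have hDiag : ∀ k : ℕ, t (j+1+k) (j+1+k) = 0 := by
    intro k
    induction k with
    | zero =>
      have E := hR1 j j le_rfl ⟨j, rfl⟩
      have h0 : ((j:ℂ)+(j:ℂ)+(n:ℂ)-2) * ((j:ℂ)-(i:ℂ)) * t (j+1) (j+1) = 0 := by
        linear_combination -E
      have := hmul _ _ _ (hne (2*j+n) 2 (by omega) _ (by push_cast; ring))
        (hsub j i (by omega)) h0
      simpa using this
    | succ k ih =>
      have E := hR1 (j+1+k) (j+1+k) le_rfl ⟨j+1+k, rfl⟩
      have h0 : (((j+1+k:ℕ):ℂ)+((j+1+k:ℕ):ℂ)+(n:ℂ)-2) * (((j+1+k:ℕ):ℂ)-(i:ℂ))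
          * t ((j+1+k)+1) ((j+1+k)+1) = 0 := by
        linear_combination -E + (2*((j+1+k:ℕ):ℂ)+(n:ℂ)-2) * (((j+1+k:ℕ):ℂ)-(j:ℂ)) * ih
      have := hmul _ _ _ (hne (2*(j+1+k)+n) 2 (by omega) _ (by push_cast; ring))
        (hsub (j+1+k) i (by omega)) h0
      exact this
  -- Claim B, general
  have hB : ∀ m α' : ℕ, j < α' → t (α' + 2*m) α' = 0 := by
    intro m
    induction m with
    | zero =>
      intro α' hj
      have e : j+1+(α'-(j+1)) = α' := by omega
      have h := hDiag (α'-(j+1))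
      rw [e] at h
      simpa using h
    | succ m ih =>
      intro α' hj
      have E := hR2 (α'+2*m+1) (α'+1) (by omega) ⟨α'+m+1, by ring⟩ (by omega)
      simp only [Nat.add_sub_cancel] at E
      have h1 : t (α'+2*m+1) (α'+1) = 0 := by
        have h := ih (α'+1) (by omega)
        rwa [show α'+1+2*m = α'+2*m+1 from by omega] at h
      have h2 : t (α'+2*m) α' = 0 := ih α' hj
      have h0 : (((α'+2*m+1:ℕ):ℂ)-((α'+1:ℕ):ℂ)+1) * (((α'+2*m+1:ℕ):ℂ)-(i:ℂ))
          * t (α'+2*m+1+1) α' = 0 := by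
        linear_combination E
          - (2*((α'+2*m+1:ℕ):ℂ)+(n:ℂ)-2) * (((α'+1:ℕ):ℂ)+(j:ℂ)+(n:ℂ)-3) * h1
          + (((α'+2*m+1:ℕ):ℂ)+((α'+1:ℕ):ℂ)+(n:ℂ)-3) * (((α'+2*m+1:ℕ):ℂ)+(i:ℂ)+(n:ℂ)-2) * h2
      have hT := hmul _ _ _ (hne (α'+2*m+2) (α'+1) (by omega) _ (by push_cast; ring))
        (hsub (α'+2*m+1) i (by omega)) h0
      have e : α' + 2*(m+1) = α'+2*m+1+1 := by omega
      rw [e]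
      exact hT
  -- Conclusion
  intro α α' hcase
  rcases hcase with h | h
  · exact hA α α' h
  · rcases Nat.lt_or_ge α α' with hlt | hle
    · exact hzero α α' (Or.inl hlt)
    · rcases Nat.even_or_odd (α+α') with hev | hod
      · obtain ⟨k, hk⟩ := hev
        obtain ⟨m, hm⟩ : ∃ m, α = α' + 2*m := ⟨(α-α')/2, by omega⟩
        subst hm
        exact hB m α' h
      · exact hzero α α' (Or.inr hod)

end
end
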